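/- Let (η_1, ..., η_N) ~ M(n, p_1, ..., p_N) and let ξ_1, ..., ξ_N be independent with ξ_m ~ Poisson(np_m), S_N = Σ_{m=1}^N (ξ_m − np_m), T_N = Σ_{m=1}^N h_m(ξ_m), R_N = Σ_{m=1}^N h_m(η_m) for Borel functions h_m. Then for every nonnegative integer k, E[R_N^k] = ν_n ∫_{−π√n}^{π√n} E[T_N^k exp(iτ S_N/√n)] dτ, where ν_n = (2π√n P{S_N = 0})^{−1}. -/

import Mathlib

open Real Finset MeasureTheory

lemma key_integral (n : ℕ) (hn : 1 ≤ n) (s : ℕ) :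
    (∫ τ in (-(Real.pi * Real.sqrt n))..(Real.pi * Real.sqrt n),
      Complex.exp (Complex.I * (τ : ℂ) * (((s : ℕ) : ℂ) - (n : ℂ)) / (Real.sqrt n : ℂ)))
      = if s = n then ((2 * Real.pi * Real.sqrt n : ℝ) : ℂ) else 0 := by
  have hs0 : (0:ℝ) < Real.sqrt n := Real.sqrt_pos.2 (by exact_mod_cast hn)
  have hsC : ((Real.sqrt n : ℝ) : ℂ) ≠ 0 := by exact_mod_cast hs0.ne'
  by_cases hsn : s = n
  · subst hsn
    simp only [sub_self, mul_zero, zero_mul, zero_div, mul_zero, Complex.exp_zero, if_true]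
    rw [intervalIntegral.integral_const]
    simp [Complex.real_smul]
    ring
  · have hd : ((s : ℂ) - n) ≠ 0 := by
      intro hc
      apply hsn
      have : (s : ℂ) = n := by linear_combination hc
      exact_mod_cast this
    set c : ℂ := Complex.I * ((s : ℂ) - n) / (Real.sqrt n : ℂ) with hc
    have hcne : c ≠ 0 := by
      simp [hc, div_eq_zero_iff, Complex.I_ne_zero, hd, hsC]
    have heq : ∀ τ : ℝ, Complex.I * (τ : ℂ) * (((s : ℕ) : ℂ) - (n : ℂ)) / (Real.sqrt n : ℂ)
        = c * τ := by intro τ; rw [hc]; ring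
    simp only [heq]
    rw [integral_exp_mul_complex hcne]
    have hm : ∃ m : ℤ, ((s : ℂ) - n) = m := ⟨(s : ℤ) - n, by push_cast; ring⟩
    obtain ⟨m, hm⟩ := hm
    have h1 : c * (Real.pi * Real.sqrt n) = ((m : ℂ) * Real.pi) * Complex.I := by
      rw [hc, hm]; field_simp
    have h2 : c * (-(Real.pi * Real.sqrt n)) = (-((m : ℂ) * Real.pi)) * Complex.I := by
      rw [hc, hm]; field_simp
    push_cast
    rw [h1, h2, Complex.exp_mul_I, Complex.exp_mul_I]
    simp [Complex.sin_int_mul_pi, Complex.cos_neg, Complex.sin_neg, hsn]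

theorem moment_multinomial_eq_poisson_integral (N n : ℕ) (hN : 1 ≤ N) (hn : 1 ≤ n)
    (p : Fin N → ℝ) (hp : ∀ m, 0 < p m) (hsum : ∑ m, p m = 1)
    (h : Fin N → ℕ → ℝ) (k : ℕ)
    (hSummable : Summable (fun x : Fin N → ℕ =>
      (∏ m, Real.exp (-(n * p m)) * (n * p m) ^ (x m) / Nat.factorial (x m)) *
        |∑ m, h m (x m)| ^ k)) :
    ((∑' x : Fin N → ℕ,
        (if ∑ m, x m = n then
          (Nat.factorial n : ℝ) / (∏ m, (Nat.factorial (x m) : ℝ)) * ∏ m, p m ^ (x m)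
        else 0) * (∑ m, h m (x m)) ^ k : ℝ) : ℂ) =
      ((2 * Real.pi * Real.sqrt n * (Real.exp (-(n : ℝ)) * (n : ℝ) ^ n / Nat.factorial n))⁻¹ : ℝ) *
        ∫ τ in (-(Real.pi * Real.sqrt n))..(Real.pi * Real.sqrt n),
          ∑' x : Fin N → ℕ,
            ((∏ m, Real.exp (-(n * p m)) * (n * p m) ^ (x m) / Nat.factorial (x m) : ℝ) : ℂ) *
              ((∑ m, h m (x m) : ℝ) : ℂ) ^ k *
              Complex.exp (Complex.I * (τ : ℂ) * (((∑ m, x m : ℕ) : ℂ) - (n : ℂ)) /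
                (Real.sqrt n : ℂ)) := by
  have hs0 : (0:ℝ) < Real.sqrt n := Real.sqrt_pos.2 (by exact_mod_cast hn)
  set a : ℝ := Real.pi * Real.sqrt n with ha
  have ha0 : 0 < a := by positivity
  have hab : -a ≤ a := by linarith
  set w : (Fin N → ℕ) → ℝ := fun x =>
    ∏ m, Real.exp (-(n * p m)) * (n * p m) ^ (x m) / Nat.factorial (x m) with hw
  set H : (Fin N → ℕ) → ℝ := fun x => ∑ m, h m (x m) with hH
  have hwnn : ∀ x, 0 ≤ w x := by
    intro x
    apply Finset.prod_nonneg
    intro m _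
    have := (hp m).le
    positivity
  set F : (Fin N → ℕ) → ℝ → ℂ := fun x τ =>
    ((w x : ℝ) : ℂ) * ((H x : ℝ) : ℂ) ^ k *
      Complex.exp (Complex.I * (τ : ℂ) * (((∑ m, x m : ℕ) : ℂ) - (n : ℂ)) /
        (Real.sqrt n : ℂ)) with hF
  -- norm of F
  have hFnorm : ∀ x τ, ‖F x τ‖ = w x * |H x| ^ k := by
    intro x τ
    have hexp : Complex.I * (τ : ℂ) * (((∑ m, x m : ℕ) : ℂ) - (n : ℂ)) / (Real.sqrt n : ℂ)
        = ((τ * (((∑ m, x m : ℕ) : ℝ) - n) / Real.sqrt n : ℝ) : ℂ) * Complex.I := by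
      push_cast; ring
    rw [hF]
    simp only [norm_mul, norm_pow, Complex.norm_real, hexp,
      Complex.norm_exp_ofReal_mul_I, mul_one]
    rw [Real.norm_eq_abs, Real.norm_eq_abs, abs_of_nonneg (hwnn x)]
  -- swap integral and tsum
  have hswap : (∫ τ in (-a)..a, ∑' x : Fin N → ℕ, F x τ)
      = ∑' x : Fin N → ℕ, ∫ τ in (-a)..a, F x τ := by
    rw [intervalIntegral.integral_of_le hab]
    rw [MeasureTheory.integral_tsum ?_ ?_]
    · exact tsum_congr fun x => (intervalIntegral.integral_of_le hab).symm
    · intro x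
      apply Continuous.aestronglyMeasurable
      apply Continuous.mul continuous_const
      exact Complex.continuous_exp.comp (by continuity)
    · have hnn : Summable (fun x => ‖w x * |H x| ^ k‖₊) := by
        rw [← NNReal.summable_coe]
        apply hSummable.congr
        intro x
        rw [coe_nnnorm, Real.norm_eq_abs, abs_of_nonneg (mul_nonneg (hwnn x) (by positivity))]
      have hle : ∀ x : Fin N → ℕ, (∫⁻ τ in Set.Ioc (-a) a, ‖F x τ‖₊)
          = (‖w x * |H x| ^ k‖₊ : ENNReal) * ENNReal.ofReal (2 * a) := by
        intro x
        have : (fun τ => (‖F x τ‖₊ : ENNReal)) = fun _ => (‖w x * |H x| ^ k‖₊ : ENNReal) := by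
          funext τ
          congr 1
          ext
          rw [coe_nnnorm, coe_nnnorm, hFnorm x τ, Real.norm_eq_abs,
            abs_of_nonneg (mul_nonneg (hwnn x) (by positivity))]
        rw [this, MeasureTheory.setLIntegral_const, Real.volume_Ioc]
        congr 1
        ring_nf
      simp only [enorm_eq_nnnorm]
      rw [tsum_congr hle, ENNReal.tsum_mul_right]
      exact ENNReal.mul_ne_top (ENNReal.tsum_coe_ne_top_iff_summable.2 hnn) ENNReal.ofReal_ne_top
  -- compute each integral
  have hterm : ∀ x : Fin N → ℕ, (∫ τ in (-a)..a, F x τ)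
      = ((w x * H x ^ k * (if ∑ m, x m = n then 2 * a else 0) : ℝ) : ℂ) := by
    intro x
    rw [hF]
    simp only
    rw [intervalIntegral.integral_const_mul, ha, key_integral n hn (∑ m, x m)]
    by_cases hx : ∑ m, x m = n
    · simp only [hx, if_true, ha]
      push_cast
      ring
    · simp [hx]
  -- the real per-term identity
  have hP0 : Real.exp (-(n:ℝ)) * (n:ℝ) ^ n / Nat.factorial n > 0 := by positivity
  have hreal : ∀ x : Fin N → ℕ,
      (if ∑ m, x m = n then
          (Nat.factorial n : ℝ) / (∏ m, (Nat.factorial (x m) : ℝ)) * ∏ m, p m ^ (x m)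
        else 0) * H x ^ k
      = (2 * Real.pi * Real.sqrt n * (Real.exp (-(n : ℝ)) * (n : ℝ) ^ n / Nat.factorial n))⁻¹ *
          (w x * H x ^ k * (if ∑ m, x m = n then 2 * a else 0)) := by
    intro x
    by_cases hx : ∑ m, x m = n
    · simp only [hx, if_true]
      have h1 : ∏ m, Real.exp (-((n:ℝ) * p m)) = Real.exp (-(n:ℝ)) := by
        rw [← Real.exp_sum]
        congr 1
        have : ∑ m, -((n:ℝ) * p m) = -((n:ℝ) * ∑ m, p m) := by
          simp [Finset.mul_sum]
        rw [this, hsum, mul_one]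
      have h2 : ∏ m, ((n:ℝ) * p m) ^ (x m) = (n:ℝ) ^ n * ∏ m, p m ^ (x m) := by
        simp only [mul_pow]
        rw [Finset.prod_mul_distrib, Finset.prod_pow_eq_pow_sum, hx]
      have hwval : w x = Real.exp (-(n:ℝ)) * (n:ℝ) ^ n * (∏ m, p m ^ (x m)) /
          (∏ m, (Nat.factorial (x m) : ℝ)) := by
        rw [hw]
        simp only
        rw [Finset.prod_div_distrib, Finset.prod_mul_distrib, h1, h2]
        ring
      rw [hwval, ha]
      have hfacx : (∏ m, (Nat.factorial (x m) : ℝ)) > 0 := by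
        apply Finset.prod_pos; intro m _; exact_mod_cast Nat.factorial_pos (x m)
      have hfn : (Nat.factorial n : ℝ) > 0 := by exact_mod_cast Nat.factorial_pos n
      have hnn0 : (0:ℝ) < (n:ℝ)^n := by
        have : (0:ℝ) < (n:ℝ) := by exact_mod_cast hn
        positivity
      have hpi : (0:ℝ) < Real.pi := Real.pi_pos
      field_simp
    · simp [hx]
  -- put it together
  rw [hswap, tsum_congr hterm, ← Complex.ofReal_tsum, ← Complex.ofReal_mul]
  congr 1
  rw [← tsum_mul_left]
  exact tsum_congr hreal
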